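/- Let L be a first-order language and C a class of finite L-structures with k-ERP. Then for all A_1,…,A_n ∈ C each with exactly k elements and every B ∈ C into which each A_i embeds, there exists C' ∈ C such that for every family of colourings χ_i : Emb(A_i, C') → Fin 2 (for i ≤ n), there is an embedding g ∈ Emb(B, C') such that for every i ≤ n the map f ↦ χ_i(g ∘ f) is constant on Emb(A_i, B). -/
import Mathlib


open FirstOrder

/-- A finite structure in the language `L`. -/
structure FinStruct (L : Language) where
  carrier : Type
  str : L.Structure carrier
  fin : Finite carrier

attribute [instance] FinStruct.str FinStruct.fin

/-- `A` has embedding Ramsey degree at most `d` in the class `C`. -/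
def embRamseyDegLE (L : Language) (C : Set (FinStruct L)) (A : FinStruct L) (d : ℕ) : Prop :=
  ∀ B ∈ C, ∀ n : ℕ, ∃ C' ∈ C, ∀ χ : (A.carrier ↪[L] C'.carrier) → Fin n,
    ∃ g : B.carrier ↪[L] C'.carrier,
      (Set.range fun f : A.carrier ↪[L] B.carrier => χ (g.comp f)).ncard ≤ d

/-- `C` has `k`-ERP: every member of `C` with exactly `k` elements is a Ramsey object,
i.e. has embedding Ramsey degree at most `1`. -/
def kERP (L : Language) (C : Set (FinStruct L)) (k : ℕ) : Prop :=
  ∀ A ∈ C, Nat.card A.carrier = k → embRamseyDegLE L C A 1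

theorem kERP_simultaneous_colourings (L : Language) (C : Set (FinStruct L)) (k : ℕ)
    (hC : kERP L C k) (n : ℕ) (A : Fin n → FinStruct L) (B : FinStruct L)
    (hA : ∀ i, A i ∈ C) (hcard : ∀ i, Nat.card (A i).carrier = k) (hB : B ∈ C)
    (hemb : ∀ i, Nonempty ((A i).carrier ↪[L] B.carrier)) :
    ∃ C' ∈ C, ∀ χ : ∀ i, ((A i).carrier ↪[L] C'.carrier) → Fin 2,
      ∃ g : B.carrier ↪[L] C'.carrier,
        ∀ i, ∀ f f' : (A i).carrier ↪[L] B.carrier, χ i (g.comp f) = χ i (g.comp f') := by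
  induction n with
  | zero =>
    exact ⟨B, hB, fun χ => ⟨Language.Embedding.refl L B.carrier, fun i => i.elim0⟩⟩
  | succ m ih =>
    obtain ⟨C₁, hC₁, hprop₁⟩ := ih (fun i => A i.castSucc) (fun i => hA _)
      (fun i => hcard _) (fun i => hemb _)
    obtain ⟨C₂, hC₂, hprop₂⟩ := hC (A (Fin.last m)) (hA _) (hcard _) C₁ hC₁ 2
    refine ⟨C₂, hC₂, fun χ => ?_⟩
    obtain ⟨g₁, hg₁⟩ := hprop₂ (χ (Fin.last m))
    obtain ⟨g₂, hg₂⟩ := hprop₁ (fun i f => χ i.castSucc (g₁.comp f))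
    refine ⟨g₁.comp g₂, fun i => ?_⟩
    refine Fin.lastCases ?_ ?_ i
    · intro f f'
      have h := (Set.ncard_le_one (Set.toFinite _)).mp hg₁
      have key : χ (Fin.last m) (g₁.comp (g₂.comp f)) = χ (Fin.last m) (g₁.comp (g₂.comp f')) :=
        h _ ⟨g₂.comp f, rfl⟩ _ ⟨g₂.comp f', rfl⟩
      simpa [Language.Embedding.comp_assoc] using key
    · intro j f f'
      have key := hg₂ j f f'
      simpa [Language.Embedding.comp_assoc] using key
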